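/- arXiv:2306.06216 — 2 statements merged into one kernel-verified Lean document; each statement's English description precedes it below -/
import Mathlib

section
/- Let Q be an m-coloured quiver in the class Q_n^m (equivalently, in the coloured mutation class of A_n) and let Q' be its 0-coloured part, i.e. the quiver with the same vertices containing exactly the arrows of Q of colour 0. Suppose c = (x_1 x_2 ⋯ x_k) is a k-cycle in Q', i.e. a closed directed path x_1 → x_2 → … → x_k → x_1 in Q' with x_1, …, x_k pairwise distinct and k ≥ 3. Then k = m + 2. -/
namespace MutClassAn

open Finset

variable {V : Type} [Fintype V] [DecidableEq V]

/-- `M i j c` is the number of arrows from `i` to `j` of colour `c`.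
An `m`-coloured quiver has no loops, is monochromatic and skew-symmetric
(`c.rev = m - c` in `Fin (m+1)`). -/
def IsColouredQuiver {m : ℕ} (M : V → V → Fin (m + 1) → ℕ) : Prop :=
  (∀ i c, M i i c = 0) ∧
  (∀ i j c c', M i j c ≠ 0 → M i j c' ≠ 0 → c = c') ∧
  (∀ i j c, M i j c = M j i c.rev)

/-- A coloured quiver is simple if there is at most one arrow between any two
vertices in each direction. -/
def IsSimpleCQ {m : ℕ} (M : V → V → Fin (m + 1) → ℕ) : Prop :=
  ∀ i j : V, (∑ c, M i j c) ≤ 1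

/-- Adjacency in the underlying graph. -/
def CQAdj {m : ℕ} (M : V → V → Fin (m + 1) → ℕ) (i j : V) : Prop :=
  i ≠ j ∧ ∃ c, M i j c ≠ 0

/-- The colour of the (unique, for simple quivers) arrow from `i` to `j`. -/
def colourOf {m : ℕ} (M : V → V → Fin (m + 1) → ℕ) (i j : V) : ℕ :=
  ∑ c : Fin (m + 1), M i j c * c.val

/-- Buan–Thomas coloured quiver mutation at the vertex `j`. -/
def mutate {m : ℕ} (M : V → V → Fin (m + 1) → ℕ) (j : V) :
    V → V → Fin (m + 1) → ℕ := fun i k c =>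
  if k = j then M i k (c + 1)
  else if i = j then M i k (c - 1)
  else ((M i k c : ℤ) - ∑ t ∈ Finset.univ.filter (fun t => t ≠ c), (M i k t : ℤ)
      + ((M i j c : ℤ) - (M i j (c - 1) : ℤ)) * (M j k 0 : ℤ)
      + (M i j (Fin.last m) : ℤ) * ((M j k c : ℤ) - (M j k (c + 1) : ℤ))).toNat

/-- Mutation equivalence: the equivalence relation generated by single mutations. -/
def MutEquiv {m : ℕ} (M M' : V → V → Fin (m + 1) → ℕ) : Prop :=
  Relation.EqvGen (fun A B => ∃ v, mutate A v = B) M M'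

/-- A hole is an induced cycle of length at least `4` in the underlying graph. -/
def HasHole {m : ℕ} (M : V → V → Fin (m + 1) → ℕ) : Prop :=
  ∃ k : ℕ, 4 ≤ k ∧ ∃ x : ZMod k → V, Function.Injective x ∧
    (∀ i, CQAdj M (x i) (x (i + 1))) ∧
    ∀ i j : ZMod k, i ≠ j → j ≠ i + 1 → i ≠ j + 1 → ¬ CQAdj M (x i) (x j)

/-- A clique: a set of pairwise adjacent vertices. -/
def IsCliqueCQ {m : ℕ} (M : V → V → Fin (m + 1) → ℕ) (S : Set V) : Prop :=
  S.Pairwise (CQAdj M)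

/-- The set of neighbours of a vertex. -/
def nbrs {m : ℕ} (M : V → V → Fin (m + 1) → ℕ) (v : V) : Set V :=
  {u | CQAdj M v u}

/-- Connectedness of the underlying graph. -/
def CQConnected {m : ℕ} (M : V → V → Fin (m + 1) → ℕ) : Prop :=
  ∀ u w : V, Relation.ReflTransGen (CQAdj M) u w

/-- Condition (1) of the class `𝒬ₙᵐ`: the neighbourhood of every vertex is covered
by two cliques of sizes `r, k ≤ m + 2` with `r + k = z + 2`, with no arrows between
the two cliques away from the vertex. -/
def Cond1 {m : ℕ} (M : V → V → Fin (m + 1) → ℕ) : Prop :=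
  ∀ v : V, (nbrs M v).Nonempty →
    ∃ R K : Finset V, v ∈ R ∧ v ∈ K ∧ IsCliqueCQ M ↑R ∧ IsCliqueCQ M ↑K ∧
      R.card + K.card = (nbrs M v).ncard + 2 ∧ R.card ≤ m + 2 ∧ K.card ≤ m + 2 ∧
      (∀ u ∈ nbrs M v, u ∈ R ∨ u ∈ K) ∧
      ∀ a ∈ R, a ≠ v → ∀ b ∈ K, b ≠ v → ¬ CQAdj M a b

/-- Condition (2) of the class `𝒬ₙᵐ`: every triangle inside a clique has colour
sum `m - 1` along one of its two orientations (sums taken in `ℤ`). -/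
def Cond2 {m : ℕ} (M : V → V → Fin (m + 1) → ℕ) : Prop :=
  ∀ v1 v2 v3 : V, v1 ≠ v2 → v2 ≠ v3 → v1 ≠ v3 →
    CQAdj M v1 v2 → CQAdj M v2 v3 → CQAdj M v1 v3 →
    ((colourOf M v2 v1 : ℤ) + (colourOf M v1 v3 : ℤ) + (colourOf M v3 v2 : ℤ)
        = (m : ℤ) - 1 ∨
      ((m : ℤ) - colourOf M v2 v1) + ((m : ℤ) - colourOf M v1 v3)
          + ((m : ℤ) - colourOf M v3 v2) = (m : ℤ) - 1)

/-- Membership in the class `𝒬ₙᵐ` (`n` being the cardinality of the vertex set). -/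
def MemQClass {m : ℕ} (M : V → V → Fin (m + 1) → ℕ) : Prop :=
  IsColouredQuiver M ∧ IsSimpleCQ M ∧ CQConnected M ∧ ¬ HasHole M ∧ Cond1 M ∧ Cond2 M

/-- An `Aₙ`-quiver: the underlying graph is the path graph on the vertex set. -/
def IsAnQuiver {m : ℕ} (M : V → V → Fin (m + 1) → ℕ) : Prop :=
  ∃ e : Fin (Fintype.card V) ≃ V,
    ∀ i j : Fin (Fintype.card V),
      CQAdj M (e i) (e j) ↔ (i.val + 1 = j.val ∨ j.val + 1 = i.val)

/-- The coloured quiver on `Fin n` whose underlying graph is the path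
`0 — 1 — ⋯ — (n-1)`, with the arrow `j+1 → j` coloured `c j` and the arrow
`j → j+1` coloured `m - c j`. -/
def pathQuiver (m n : ℕ) (c : ℕ → Fin (m + 1)) :
    Fin n → Fin n → Fin (m + 1) → ℕ := fun i j d =>
  if j.val + 1 = i.val ∧ d = c j.val then 1
  else if i.val + 1 = j.val ∧ d = (c i.val).rev then 1 else 0

/-- Delete all arrows between vertices of `S`. -/
def deleteArrows {m : ℕ} (M : V → V → Fin (m + 1) → ℕ) (S : Finset V) :
    V → V → Fin (m + 1) → ℕ := fun i j c =>
  if i ∈ S ∧ j ∈ S then 0 else M i j c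

/-- The connected component of `u` is an `A_k`-quiver (a path) for some `k ≥ 1`. -/
def ComponentIsPath {m : ℕ} (M : V → V → Fin (m + 1) → ℕ) (u : V) : Prop :=
  ∃ (k : ℕ) (x : Fin k → V), 1 ≤ k ∧ Function.Injective x ∧
    Set.range x = {w | Relation.ReflTransGen (CQAdj M) u w} ∧
    ∀ i j : Fin k, CQAdj M (x i) (x j) ↔ (i.val + 1 = j.val ∨ j.val + 1 = i.val)

/-- An almost extremal clique: deleting its arrows leaves a connected component
which is an `A_k`-quiver for some `k ≥ 1`. -/
def AlmostExtremalClique {m : ℕ} (M : V → V → Fin (m + 1) → ℕ) (S : Finset V) : Prop :=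
  IsCliqueCQ M ↑S ∧ ∃ u : V, ComponentIsPath (deleteArrows M S) u

/-- An extremal clique: deleting its arrows leaves a single-vertex component. -/
def ExtremalClique {m : ℕ} (M : V → V → Fin (m + 1) → ℕ) (S : Finset V) : Prop :=
  IsCliqueCQ M ↑S ∧
    ∃ u : V, {w | Relation.ReflTransGen (CQAdj (deleteArrows M S)) u w} = {u}

/-- A coloured clique structure on a vertex type: colours `c i j ∈ {0,…,m}` with
skew-symmetry `c j i = m - c i j` and the triangle condition. -/
def IsCliqueColouring (m : ℕ) {W : Type} (c : W → W → ℕ) : Prop :=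
  (∀ i j : W, i ≠ j → c i j ≤ m) ∧
  (∀ i j : W, i ≠ j → c i j + c j i = m) ∧
  ∀ i j l : W, i ≠ j → j ≠ l → i ≠ l →
    ((c i j : ℤ) + (c j l : ℤ) + (c l i : ℤ) = (m : ℤ) - 1 ∨
      (c i j : ℤ) + (c j l : ℤ) + (c l i : ℤ) = 2 * (m : ℤ) + 1)

/-- Cyclic successor in `Fin k`. -/
def cyc {k : ℕ} (i : Fin k) : Fin k :=
  ⟨(i.val + 1) % k, Nat.mod_lt _ i.pos⟩

/-- The weight of the Hamiltonian cycle `x 0 → x 1 → ⋯ → x (k-1) → x 0`: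
the sum of the colours of its arrows. -/
def cycleWeight {W : Type} (c : W → W → ℕ) {k : ℕ} (x : Fin k → W) : ℤ :=
  ∑ i : Fin k, (c (x i) (x (cyc i)) : ℤ)

/-- The Hamiltonian cycle on `k+1` vertices obtained from the cycle
`x 0 → ⋯ → x (k-1) → x 0` by inserting the vertex `x (Fin.last k)`
immediately after `x j`. -/
def insertAfter {W : Type} {k : ℕ} (x : Fin (k + 1) → W) (j : Fin k) :
    Fin (k + 1) → W := fun i =>
  if i = 0 then x (Fin.last k)
  else x (Fin.castSucc ⟨(j.val + i.val) % k, Nat.mod_lt _ j.pos⟩)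

section Helpers

variable {m : ℕ} (M : V → V → Fin (m + 1) → ℕ)

lemma adj_symm (hskew : ∀ i j c, M i j c = M j i c.rev) {i j : V}
    (h : CQAdj M i j) : CQAdj M j i := by
  obtain ⟨hne, c, hc⟩ := h
  refine ⟨hne.symm, c.rev, ?_⟩
  rw [hskew j i c.rev, Fin.rev_rev]
  exact hc

lemma colourOf_eq_zero (hmono : ∀ i j c c', M i j c ≠ 0 → M i j c' ≠ 0 → c = c')
    {i j : V} (h : M i j 0 ≠ 0) : colourOf M i j = 0 := by
  unfold colourOf
  apply Finset.sum_eq_zero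
  intro c _
  by_cases hc : c = 0
  · simp [hc]
  · have : M i j c = 0 := by
      by_contra h'
      exact hc (hmono i j c 0 h' h)
    simp [this]

lemma colourOf_add (hmono : ∀ i j c c', M i j c ≠ 0 → M i j c' ≠ 0 → c = c')
    (hskew : ∀ i j c, M i j c = M j i c.rev) (hS : IsSimpleCQ M)
    {i j : V} (hadj : CQAdj M i j) :
    colourOf M i j + colourOf M j i = m := by
  obtain ⟨hne, c0, hc0⟩ := hadj
  have hz : ∀ c, c ≠ c0 → M i j c = 0 := by
    intro c hc
    by_contra h'
    exact hc (hmono i j c c0 h' hc0)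
  have h1 : M i j c0 = 1 := by
    have hle : M i j c0 ≤ ∑ c, M i j c :=
      Finset.single_le_sum (fun c _ => Nat.zero_le _) (Finset.mem_univ c0)
    have := hS i j
    omega
  have hcol1 : colourOf M i j = c0.val := by
    unfold colourOf
    rw [Finset.sum_eq_single c0]
    · rw [h1, one_mul]
    · intro c _ hc
      rw [hz c hc, zero_mul]
    · intro h
      exact absurd (Finset.mem_univ c0) h
  have hji : ∀ c, M j i c = M i j c.rev := fun c => hskew j i c
  have hz' : ∀ c, c ≠ c0.rev → M j i c = 0 := by
    intro c hc
    rw [hji c]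
    apply hz
    intro h
    exact hc (by rw [← h, Fin.rev_rev])
  have h1' : M j i c0.rev = 1 := by rw [hji, Fin.rev_rev, h1]
  have hcol2 : colourOf M j i = c0.rev.val := by
    unfold colourOf
    rw [Finset.sum_eq_single c0.rev]
    · rw [h1', one_mul]
    · intro c _ hc
      rw [hz' c hc, zero_mul]
    · intro h
      exact absurd (Finset.mem_univ c0.rev) h
  have hrev : c0.rev.val = m - c0.val := by
    rw [Fin.val_rev]
    omega
  have : c0.val ≤ m := Fin.is_le c0
  omega

lemma tri_colour (hskew : ∀ i j c, M i j c = M j i c.rev) (hC2 : Cond2 M) {a b c : V}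
    (hab : a ≠ b) (hbc : b ≠ c) (hac : a ≠ c)
    (hAab : CQAdj M a b) (hAbc : CQAdj M b c) (hAac : CQAdj M a c) :
    (colourOf M a b : ℤ) + colourOf M b c + colourOf M c a = (m : ℤ) - 1 ∨
    (colourOf M a b : ℤ) + colourOf M b c + colourOf M c a = 2 * m + 1 := by
  have h := hC2 b a c hab.symm hac hbc (adj_symm M hskew hAab) hAac hAbc
  rcases h with h | h
  · left; linarith
  · right; linarith

lemma pairwise_apply {α : Type*} {R : α → α → Prop} {n : ℕ} {f : Fin n → α}
    (hinj : Function.Injective f) (hp : (Set.range f).Pairwise R) :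
    ∀ i j : Fin n, i ≠ j → R (f i) (f j) :=
  fun i j hij => hp ⟨i, rfl⟩ ⟨j, rfl⟩ (fun h => hij (hinj h))

lemma clique_card_le (hC1 : Cond1 M) (S : Finset V) (hS : IsCliqueCQ M ↑S)
    {v w : V} (hv : v ∈ S) (hw : w ∈ S) (hvw : v ≠ w) : S.card ≤ m + 2 := by
  have hadj : ∀ u ∈ S, u ≠ v → CQAdj M v u := fun u hu hne =>
    hS hv hu (fun h => hne h.symm)
  have hne : (nbrs M v).Nonempty := ⟨w, hadj w hw hvw.symm⟩
  obtain ⟨R, K, hvR, hvK, hRc, hKc, hcard, hRle, hKle, hcover, hcross⟩ := hC1 v hne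
  by_cases hall : ∀ u ∈ S, u ≠ v → u ∈ R
  · have hsub : S ⊆ R := by
      intro u hu
      by_cases h : u = v
      · exact h ▸ hvR
      · exact hall u hu h
    exact le_trans (Finset.card_le_card hsub) hRle
  · push_neg at hall
    obtain ⟨u0, hu0S, hu0v, hu0R⟩ := hall
    have hu0K : u0 ∈ K := by
      rcases hcover u0 (hadj u0 hu0S hu0v) with h | h
      · exact absurd h hu0R
      · exact h
    have hsub : S ⊆ K := by
      intro u hu
      by_cases h : u = v
      · exact h ▸ hvK
      rcases hcover u (hadj u hu h) with hR | hK
      · by_cases huu0 : u = u0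
        · exact absurd (huu0 ▸ hu0R) (fun h' => h' hR)
        · exact absurd (hS hu hu0S huu0) (hcross u hR h u0 hu0K hu0v)
      · exact hK
    exact le_trans (Finset.card_le_card hsub) hKle

lemma mod_succ_mod (a k : ℕ) : (a % k + 1) % k = (a + 1) % k :=
  (Nat.mod_modEq a k).add_right 1

lemma chord_case (hskew : ∀ i j c, M i j c = M j i c.rev) (hC1 : Cond1 M)
    {k : ℕ} (hk : 4 ≤ k) (x : Fin k → V) (hinj : Function.Injective x)
    (hcyc : ∀ i, CQAdj M (x i) (x (cyc i)))
    {D : ℕ} (hD2 : 2 ≤ D) (hDk : D ≤ k - 2)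
    (hchord : CQAdj M (x ⟨0, by omega⟩) (x ⟨D, by omega⟩))
    (IH : ∀ k' : ℕ, k' < k → 3 ≤ k' → ∀ x' : Fin k' → V, Function.Injective x' →
      (∀ i, CQAdj M (x' i) (x' (cyc i))) → (Set.range x').Pairwise (CQAdj M)) :
    (Set.range x).Pairwise (CQAdj M) := by
  have hDk' : D < k := by omega
  have hstep : ∀ (a : ℕ) (ha : a < k) (hb : (a + 1) % k < k),
      CQAdj M (x ⟨a, ha⟩) (x ⟨(a + 1) % k, hb⟩) := fun a ha hb => hcyc ⟨a, ha⟩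
  have hxne : ∀ (a b : Fin k), a.val ≠ b.val → x a ≠ x b :=
    fun a b h e => h (congrArg Fin.val (hinj e))
  -- the first sub-cycle, on indices 0, 1, …, D
  have hyinj : Function.Injective (fun t : Fin (D + 1) => x ⟨t.val, by omega⟩) := by
    intro s t h
    have h2 := congrArg Fin.val (hinj h)
    exact Fin.ext h2
  have hycyc : ∀ t : Fin (D + 1),
      CQAdj M ((fun t : Fin (D + 1) => x ⟨t.val, by omega⟩) t)
        ((fun t : Fin (D + 1) => x ⟨t.val, by omega⟩) (cyc t)) := by
    intro t
    simp only []
    by_cases ht : t.val < D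
    · have h1 : (cyc t).val = t.val + 1 := by
        show (t.val + 1) % (D + 1) = t.val + 1
        exact Nat.mod_eq_of_lt (by omega)
      have h2 : (t.val + 1) % k = t.val + 1 := Nat.mod_eq_of_lt (by omega)
      have := hstep t.val (by omega) (Nat.mod_lt _ (by omega))
      convert this using 2
      apply Fin.ext
      simp [h1, h2]
    · have ht' : t.val = D := by have := t.isLt; omega
      have h1 : (cyc t).val = 0 := by
        show (t.val + 1) % (D + 1) = 0
        rw [ht']
        exact Nat.mod_self _
      have := adj_symm M hskew hchord
      convert this using 2
      · exact Fin.ext ht'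
      · exact Fin.ext h1
  have hY := IH (D + 1) (by omega) (by omega) _ hyinj hycyc
  have hYadj : ∀ (s t : ℕ) (hs : s ≤ D) (ht : t ≤ D), s ≠ t →
      CQAdj M (x ⟨s, by omega⟩) (x ⟨t, by omega⟩) := by
    intro s t hs ht hne
    exact pairwise_apply hyinj hY ⟨s, by omega⟩ ⟨t, by omega⟩
      (fun h => hne (congrArg Fin.val h))
  -- the second sub-cycle, on indices D, D+1, …, k-1, 0
  have hmod : ∀ t : ℕ, t ≤ k - D → (D + t) % k = if D + t < k then D + t else 0 := by
    intro t ht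
    split
    · exact Nat.mod_eq_of_lt ‹_›
    · have h : D + t = k := by omega
      rw [h, Nat.mod_self]
  have hzinj : Function.Injective
      (fun t : Fin (k - D + 1) => x ⟨(D + t.val) % k, Nat.mod_lt _ (by omega)⟩) := by
    intro s t h
    have h2 := congrArg Fin.val (hinj h)
    simp only [] at h2
    rw [hmod s.val (by omega), hmod t.val (by omega)] at h2
    apply Fin.ext
    split_ifs at h2 <;> omega
  have hzcyc : ∀ t : Fin (k - D + 1),
      CQAdj M ((fun t : Fin (k - D + 1) => x ⟨(D + t.val) % k, Nat.mod_lt _ (by omega)⟩) t)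
        ((fun t : Fin (k - D + 1) => x ⟨(D + t.val) % k, Nat.mod_lt _ (by omega)⟩) (cyc t)) := by
    intro t
    simp only []
    by_cases ht : t.val < k - D
    · have h1 : (cyc t).val = t.val + 1 := by
        show (t.val + 1) % (k - D + 1) = t.val + 1
        exact Nat.mod_eq_of_lt (by omega)
      have h2 : (D + t.val) % k = D + t.val := Nat.mod_eq_of_lt (by omega)
      have := hstep (D + t.val) (by omega) (Nat.mod_lt _ (by omega))
      convert this using 2
      · apply Fin.ext
        simp [h2]
      · apply Fin.ext
        simp only [h1, h2]
        rw [← Nat.add_assoc]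
    · have ht' : t.val = k - D := by have := t.isLt; omega
      have h1 : (cyc t).val = 0 := by
        show (t.val + 1) % (k - D + 1) = 0
        rw [ht']
        exact Nat.mod_self _
      convert hchord using 2
      · apply Fin.ext
        simp only [ht']
        show (D + (k - D)) % k = 0
        rw [show D + (k - D) = k by omega, Nat.mod_self]
      · apply Fin.ext
        simp only [h1, Nat.add_zero]
        exact Nat.mod_eq_of_lt (by omega)
  have hZ := IH (k - D + 1) (by omega) (by omega) _ hzinj hzcyc
  have hZadj : ∀ (s t : ℕ) (hs : s ≤ k - D) (ht : t ≤ k - D), s ≠ t →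
      CQAdj M (x ⟨(D + s) % k, Nat.mod_lt _ (by omega)⟩)
        (x ⟨(D + t) % k, Nat.mod_lt _ (by omega)⟩) := by
    intro s t hs ht hne
    exact pairwise_apply hzinj hZ ⟨s, by omega⟩ ⟨t, by omega⟩
      (fun h => hne (congrArg Fin.val h))
  -- a cleaner form of the z-clique
  have hZadj' : ∀ (s t : ℕ), D ≤ s → ∀ (hsk : s < k), D ≤ t → ∀ (htk : t < k), s ≠ t →
      CQAdj M (x ⟨s, hsk⟩) (x ⟨t, htk⟩) := by
    intro s t hs hsk ht htk hne
    have := hZadj (s - D) (t - D) (by omega) (by omega) (by omega)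
    convert this using 2 <;>
      · apply Fin.ext
        simp only []
        rw [hmod _ (by omega)]
        split <;> omega
  have hZadj0 : ∀ (t : ℕ), D ≤ t → ∀ (htk : t < k),
      CQAdj M (x ⟨0, by omega⟩) (x ⟨t, htk⟩) := by
    intro t ht htk
    have := hZadj (k - D) (t - D) (by omega) (by omega) (by omega)
    convert this using 2
    · apply Fin.ext
      simp only []
      rw [hmod _ (by omega)]
      split <;> omega
    · apply Fin.ext
      simp only []
      rw [hmod _ (by omega)]
      split <;> omega
  -- the cross argument via Cond1
  have hcross : ∀ i j : Fin k, 0 < i.val → i.val < D → D < j.val →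
      CQAdj M (x i) (x j) := by
    intro i j h0 hiD hjD
    have hik : i.val < k := i.isLt
    have hjk : j.val < k := j.isLt
    have hvu : CQAdj M (x ⟨0, by omega⟩) (x i) := by
      have := hYadj 0 i.val (by omega) (by omega) (by omega)
      exact this
    have hub : CQAdj M (x i) (x ⟨D, by omega⟩) := by
      have := hYadj i.val D (by omega) (by omega) (by omega)
      exact this
    have hvb : CQAdj M (x ⟨0, by omega⟩) (x ⟨D, by omega⟩) := hchord
    have hvw : CQAdj M (x ⟨0, by omega⟩) (x j) := by
      have := hZadj0 j.val (by omega) (by omega)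
      exact this
    have hwb : CQAdj M (x j) (x ⟨D, by omega⟩) := by
      have := hZadj' j.val D (by omega) (by omega) (by omega) (by omega) (by omega)
      exact this
    obtain ⟨R, K, hvR, hvK, hRc, hKc, _, _, _, hcover, hcrs⟩ :=
      hC1 (x ⟨0, by omega⟩) ⟨x i, hvu⟩
    have hbmem : x ⟨D, by omega⟩ ∈ nbrs M (x ⟨0, by omega⟩) := hvb
    have humem : x i ∈ nbrs M (x ⟨0, by omega⟩) := hvu
    have hwmem : x j ∈ nbrs M (x ⟨0, by omega⟩) := hvw
    have hbv : x ⟨D, (by omega : D < k)⟩ ≠ x ⟨0, by omega⟩ :=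
      hxne _ _ (by simp; omega)
    have huv : x i ≠ x ⟨0, by omega⟩ := hxne _ _ (by simp; omega)
    have hwv : x j ≠ x ⟨0, by omega⟩ := hxne _ _ (by simp; omega)
    have huw : x i ≠ x j := hxne _ _ (by omega)
    rcases hcover _ hbmem with hbR | hbK
    · have huR : x i ∈ R := by
        rcases hcover _ humem with h | h
        · exact h
        · exact absurd (adj_symm M hskew hub)
            (hcrs _ hbR hbv (x i) h huv)
      have hwR : x j ∈ R := by
        rcases hcover _ hwmem with h | h
        · exact h
        · exact absurd (adj_symm M hskew hwb)
            (hcrs _ hbR hbv (x j) h hwv)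
      exact hRc huR hwR huw
    · have huK : x i ∈ K := by
        rcases hcover _ humem with h | h
        · exact absurd hub (hcrs (x i) h huv _ hbK hbv)
        · exact h
      have hwK : x j ∈ K := by
        rcases hcover _ hwmem with h | h
        · exact absurd hwb (hcrs (x j) h hwv _ hbK hbv)
        · exact h
      exact hKc huK hwK huw
  -- assemble
  have main : ∀ i j : Fin k, i.val < j.val → CQAdj M (x i) (x j) := by
    intro i j hlt
    have hik : i.val < k := i.isLt
    have hjk : j.val < k := j.isLt
    rcases le_or_gt j.val D with hjD | hjD
    · have := hYadj i.val j.val (by omega) (by omega) (by omega)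
      convert this using 2 <;> exact Fin.ext rfl
    · rcases Nat.lt_or_ge i.val D with hiD | hiD
      · rcases Nat.eq_zero_or_pos i.val with h0 | h0
        · have hi0 : i = ⟨0, by omega⟩ := Fin.ext h0
          rw [hi0]
          exact hZadj0 j.val (by omega) (by omega)
        · exact hcross i j h0 hiD hjD
      · have := hZadj' i.val j.val (by omega) (by omega) (by omega) (by omega) (by omega)
        convert this using 2 <;> exact Fin.ext rfl
  rintro _ ⟨i, rfl⟩ _ ⟨j, rfl⟩ hne
  have hij : i ≠ j := fun h => hne (congrArg x h)
  rcases Nat.lt_trichotomy i.val j.val with h | h | h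
  · exact main i j h
  · exact absurd (Fin.ext h) hij
  · exact adj_symm M hskew (main j i h)

lemma cycle_clique (hskew : ∀ i j c, M i j c = M j i c.rev)
    (hHole : ¬ HasHole M) (hC1 : Cond1 M) :
    ∀ k : ℕ, 3 ≤ k → ∀ x : Fin k → V, Function.Injective x →
      (∀ i, CQAdj M (x i) (x (cyc i))) → (Set.range x).Pairwise (CQAdj M) := by
  intro k
  induction k using Nat.strong_induction_on with
  | _ k IH =>
  intro hk3 x hinj hcyc
  rcases eq_or_lt_of_le hk3 with h3 | hk4
  · -- the case k = 3 : a triangle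
    subst h3
    rintro _ ⟨i, rfl⟩ _ ⟨j, rfl⟩ hne
    have hij : i ≠ j := fun h => hne (congrArg x h)
    have h0 := hcyc 0
    have h1 := hcyc 1
    have h2 := hcyc 2
    have c0 : cyc (0 : Fin 3) = 1 := rfl
    have c1 : cyc (1 : Fin 3) = 2 := rfl
    have c2 : cyc (2 : Fin 3) = 0 := rfl
    rw [c0] at h0; rw [c1] at h1; rw [c2] at h2
    fin_cases i <;> fin_cases j <;>
      first
        | exact absurd rfl hij
        | assumption
        | exact adj_symm M hskew h0
        | exact adj_symm M hskew h1
        | exact adj_symm M hskew h2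
  · -- the case k ≥ 4 : find a chord using hole-freeness
    have hk4' : 4 ≤ k := hk4
    haveI : NeZero k := ⟨by omega⟩
    -- extract a chord
    have hchord : ∃ i j : ZMod k, i ≠ j ∧ j ≠ i + 1 ∧ i ≠ j + 1 ∧
        CQAdj M (x ⟨i.val, ZMod.val_lt i⟩) (x ⟨j.val, ZMod.val_lt j⟩) := by
      by_contra hno
      push_neg at hno
      apply hHole
      refine ⟨k, hk4', fun i => x ⟨i.val, ZMod.val_lt i⟩, ?_, ?_, ?_⟩
      · intro s t h
        have := congrArg Fin.val (hinj h)
        exact ZMod.val_injective k this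
      · intro i
        have hval : (i + 1).val = (i.val + 1) % k := by
          rw [ZMod.val_add, ZMod.val_one_eq_one_mod]
          exact (Nat.mod_modEq 1 k).add_left _
        have := hcyc ⟨i.val, ZMod.val_lt i⟩
        convert this using 2
        exact Fin.ext hval
      · intro i j hij h1 h2 hadj
        exact (hno i j hij h1 h2) hadj
    obtain ⟨iz, jz, hij, hj1, hi1, hadjc⟩ := hchord
    set A := iz.val with hA_def
    set B := jz.val with hB_def
    have hA : A < k := ZMod.val_lt iz
    have hB : B < k := ZMod.val_lt jz
    have hAB : A ≠ B := fun h => hij (ZMod.val_injective k h)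
    have hvadd : ∀ z : ZMod k, (z + 1).val = (z.val + 1) % k := by
      intro z
      rw [ZMod.val_add, ZMod.val_one_eq_one_mod]
      exact (Nat.mod_modEq 1 k).add_left _
    have hB1 : B ≠ (A + 1) % k := by
      intro h
      apply hj1
      apply ZMod.val_injective k
      rw [hvadd iz, ← h]
    have hA1 : A ≠ (B + 1) % k := by
      intro h
      apply hi1
      apply ZMod.val_injective k
      rw [hvadd jz, ← h]
    -- compute the chord's cyclic distance D from A
    have hD : ∃ D : ℕ, 2 ≤ D ∧ D ≤ k - 2 ∧ (A + D) % k = B := by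
      rcases Nat.lt_or_ge A B with hlt | hge
      · refine ⟨B - A, ?_, ?_, ?_⟩
        · have h1 : (A + 1) % k = A + 1 := Nat.mod_eq_of_lt (by omega)
          rw [h1] at hB1
          omega
        · rcases Nat.lt_or_ge (B + 1) k with h | h
          · omega
          · have hBk : B + 1 = k := by omega
            have : (B + 1) % k = 0 := by rw [hBk, Nat.mod_self]
            rw [this] at hA1
            omega
        · rw [show A + (B - A) = B by omega]
          exact Nat.mod_eq_of_lt hB
      · have hgt : B < A := by omega
        refine ⟨B + k - A, ?_, ?_, ?_⟩
        · rcases Nat.lt_or_ge (A + 1) k with h | h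
          · omega
          · have hAk : A + 1 = k := by omega
            have : (A + 1) % k = 0 := by rw [hAk, Nat.mod_self]
            rw [this] at hB1
            omega
        · have h1 : (B + 1) % k = B + 1 := Nat.mod_eq_of_lt (by omega)
          rw [h1] at hA1
          omega
        · rw [show A + (B + k - A) = B + k by omega, Nat.add_mod_right]
          exact Nat.mod_eq_of_lt hB
    obtain ⟨D, hD2, hDk, hADB⟩ := hD
    -- rotate the cycle so that the chord starts at position 0
    have hrotinj : Function.Injective
        (fun t : Fin k => x ⟨(A + t.val) % k, Nat.mod_lt _ (by omega)⟩) := by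
      intro s t h
      have h2 := congrArg Fin.val (hinj h)
      simp only [] at h2
      have h3 : s.val % k = t.val % k :=
        Nat.ModEq.add_left_cancel' A h2
      apply Fin.ext
      rw [Nat.mod_eq_of_lt s.isLt, Nat.mod_eq_of_lt t.isLt] at h3
      exact h3
    have hrotcyc : ∀ t : Fin k,
        CQAdj M ((fun t : Fin k => x ⟨(A + t.val) % k, Nat.mod_lt _ (by omega)⟩) t)
          ((fun t : Fin k => x ⟨(A + t.val) % k, Nat.mod_lt _ (by omega)⟩) (cyc t)) := by
      intro t
      simp only []
      have := hcyc ⟨(A + t.val) % k, Nat.mod_lt _ (by omega)⟩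
      convert this using 2
      apply Fin.ext
      show (A + (t.val + 1) % k) % k = ((A + t.val) % k + 1) % k
      calc (A + (t.val + 1) % k) % k = (A + (t.val + 1)) % k :=
            ((Nat.mod_modEq _ k).add_left A)
        _ = ((A + t.val) % k + 1) % k := by
            rw [mod_succ_mod, Nat.add_assoc]
    have hrotchord : CQAdj M
        ((fun t : Fin k => x ⟨(A + t.val) % k, Nat.mod_lt _ (by omega)⟩) ⟨0, by omega⟩)
        ((fun t : Fin k => x ⟨(A + t.val) % k, Nat.mod_lt _ (by omega)⟩) ⟨D, by omega⟩) := by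
      simp only []
      convert hadjc using 2
      · apply Fin.ext
        show (A + 0) % k = A
        rw [Nat.add_zero]
        exact Nat.mod_eq_of_lt hA
      · apply Fin.ext
        exact hADB
    have hDk2 : D < k := by omega
    have hres := chord_case M hskew hC1 hk4'
      (fun t : Fin k => x ⟨(A + t.val) % k, Nat.mod_lt _ (by omega)⟩)
      hrotinj hrotcyc hD2 hDk hrotchord IH
    have hrange : Set.range (fun t : Fin k => x ⟨(A + t.val) % k, Nat.mod_lt _ (by omega)⟩)
        = Set.range x := by
      apply Set.Subset.antisymm
      · rintro _ ⟨t, rfl⟩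
        exact ⟨_, rfl⟩
      · rintro _ ⟨i, rfl⟩
        have hσinj : Function.Injective
            (fun t : Fin k => (⟨(A + t.val) % k, Nat.mod_lt _ (by omega)⟩ : Fin k)) :=
          fun s t h => hrotinj (congrArg x h)
        obtain ⟨t, ht⟩ := Finite.injective_iff_surjective.mp hσinj i
        exact ⟨t, congrArg x ht⟩
    rw [← hrange]
    exact hres

end Helpers

/-- Every cycle in the `0`-coloured part of a quiver in the mutation class of
`Aₙ` has length `m + 2`. -/
theorem zero_coloured_cycle_length (m : ℕ) (hm : 1 ≤ m)
    (V : Type) [Fintype V] [DecidableEq V]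
    (M : V → V → Fin (m + 1) → ℕ) (hM : MemQClass M)
    (k : ℕ) (hk : 3 ≤ k) (x : Fin k → V) (hinj : Function.Injective x)
    (hcyc : ∀ i : Fin k, M (x i) (x (cyc i)) 0 ≠ 0) :
    k = m + 2 := by
  obtain ⟨⟨hloop, hmono, hskew⟩, hS, hconn, hHole, hC1, hC2⟩ := hM
  have hcadj : ∀ i : Fin k, CQAdj M (x i) (x (cyc i)) := fun i =>
    ⟨fun h => hcyc i (by rw [← h]; exact hloop (x i) 0), ⟨0, hcyc i⟩⟩
  have hclq := cycle_clique M hskew hHole hC1 k hk x hinj hcadj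
  have hadj : ∀ i j : Fin k, i ≠ j → CQAdj M (x i) (x j) := pairwise_apply hinj hclq
  have hk0 : 0 < k := by omega
  -- the cycle lies in a clique, which has at most m + 2 vertices
  have hkle : k ≤ m + 2 := by
    have hcard : (Finset.univ.image x).card = k := by
      rw [Finset.card_image_of_injective _ hinj, Finset.card_univ, Fintype.card_fin]
    have hclique : IsCliqueCQ M ↑(Finset.univ.image x) := by
      intro a ha b hb hne
      simp only [Finset.coe_image, Finset.coe_univ, Set.image_univ, Set.mem_range] at ha hb
      obtain ⟨i, rfl⟩ := ha
      obtain ⟨j, rfl⟩ := hb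
      exact hadj i j (fun h => hne (congrArg x h))
    have h01 : x ⟨0, by omega⟩ ≠ x ⟨1, by omega⟩ :=
      (hadj ⟨0, by omega⟩ ⟨1, by omega⟩ (fun h => by simpa using congrArg Fin.val h)).1
    have := clique_card_le M hC1 (Finset.univ.image x) hclique
      (Finset.mem_image_of_mem x (Finset.mem_univ ⟨0, by omega⟩))
      (Finset.mem_image_of_mem x (Finset.mem_univ ⟨1, by omega⟩)) h01
    omega
  -- colour bookkeeping along the cycle
  let g : ℕ → V := fun n => x ⟨n % k, Nat.mod_lt _ hk0⟩
  have hgadj : ∀ a b : ℕ, a < k → b < k → a ≠ b → CQAdj M (g a) (g b) := by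
    intro a b ha hb hne
    refine hadj ⟨a % k, Nat.mod_lt _ hk0⟩ ⟨b % k, Nat.mod_lt _ hk0⟩ ?_
    intro h
    have h2 := congrArg Fin.val h
    simp only [] at h2
    rw [Nat.mod_eq_of_lt ha, Nat.mod_eq_of_lt hb] at h2
    exact hne h2
  have hgne : ∀ a b : ℕ, a < k → b < k → a ≠ b → g a ≠ g b :=
    fun a b ha hb hne => (hgadj a b ha hb hne).1
  have hg0 : ∀ i : ℕ, colourOf M (g i) (g (i + 1)) = 0 := by
    intro i
    apply colourOf_eq_zero M hmono
    have h := hcyc ⟨i % k, Nat.mod_lt _ hk0⟩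
    have he : g (i + 1) = x (cyc ⟨i % k, Nat.mod_lt _ hk0⟩) := by
      show x _ = x _
      congr 1
      apply Fin.ext
      show (i + 1) % k = (i % k + 1) % k
      exact (mod_succ_mod i k).symm
    rw [he]
    exact h
  have key : ∀ t : ℕ, 2 ≤ t → t ≤ k - 1 →
      ∃ s : ℕ, (colourOf M (g t) (g 0) : ℤ) = (m : ℤ) + 1 - t + s * ((m : ℤ) + 2) := by
    intro t ht2
    induction t, ht2 using Nat.le_induction with
    | base =>
      intro htk
      have h2k : 2 < k := by omega
      have htri := tri_colour M hskew hC2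
        (hgne 0 1 (by omega) (by omega) (by omega))
        (hgne 1 2 (by omega) (by omega) (by omega))
        (hgne 0 2 (by omega) (by omega) (by omega))
        (hgadj 0 1 (by omega) (by omega) (by omega))
        (hgadj 1 2 (by omega) (by omega) (by omega))
        (hgadj 0 2 (by omega) (by omega) (by omega))
      have e1 : colourOf M (g 0) (g 1) = 0 := hg0 0
      have e2 : colourOf M (g 1) (g 2) = 0 := hg0 1
      rw [e1, e2] at htri
      rcases htri with h | h
      · exact ⟨0, by push_cast at h ⊢; linarith⟩
      · exact ⟨1, by push_cast at h ⊢; linarith⟩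
    | succ t ht IH =>
      intro htk
      obtain ⟨s, hs⟩ := IH (by omega)
      have h3 : t + 1 < k := by omega
      have htri := tri_colour M hskew hC2
        (hgne 0 t (by omega) (by omega) (by omega))
        (hgne t (t + 1) (by omega) (by omega) (by omega))
        (hgne 0 (t + 1) (by omega) (by omega) (by omega))
        (hgadj 0 t (by omega) (by omega) (by omega))
        (hgadj t (t + 1) (by omega) (by omega) (by omega))
        (hgadj 0 (t + 1) (by omega) (by omega) (by omega))
      have e1 : colourOf M (g t) (g (t + 1)) = 0 := hg0 t
      have e2 : colourOf M (g t) (g 0) + colourOf M (g 0) (g t) = m :=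
        colourOf_add M hmono hskew hS (hgadj t 0 (by omega) (by omega) (by omega))
      have e2' : (colourOf M (g t) (g 0) : ℤ) + colourOf M (g 0) (g t) = m := by
        exact_mod_cast e2
      rw [e1] at htri
      rcases htri with h | h
      · refine ⟨s, ?_⟩
        push_cast at h hs ⊢
        linarith
      · refine ⟨s + 1, ?_⟩
        push_cast at h hs ⊢
        linarith
  obtain ⟨s, hs⟩ := key (k - 1) (by omega) le_rfl
  have hfin : colourOf M (g (k - 1)) (g 0) = 0 := by
    have he : g ((k - 1) + 1) = g 0 := by
      show x _ = x _
      congr 1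
      apply Fin.ext
      show ((k - 1) + 1) % k = 0 % k
      rw [show (k - 1) + 1 = k by omega, Nat.mod_self, Nat.zero_mod]
    have h := hg0 (k - 1)
    rw [he] at h
    exact h
  rw [hfin] at hs
  have hc1 : ((k - 1 : ℕ) : ℤ) = (k : ℤ) - 1 := by
    rw [Nat.cast_sub (by omega : 1 ≤ k)]
    simp
  rw [hc1] at hs
  push_cast at hs
  have hge : (0 : ℤ) ≤ (s : ℤ) * ((m : ℤ) + 2) := by positivity
  have hle2 : (k : ℤ) ≤ (m : ℤ) + 2 := by exact_mod_cast hkle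
  have hzero : (s : ℤ) * ((m : ℤ) + 2) = 0 := by linarith
  have : (k : ℤ) = (m : ℤ) + 2 := by linarith
  exact_mod_cast this

end MutClassAn
end

section
/- In a coloured k-clique K = {x_1, x_2, …, x_{k+1}} with k + 1 vertices (k ≥ 3), consider, for a fixed Hamiltonian cycle (x_1 x_2 ⋯ x_k) through the first k vertices, the k Hamiltonian cycles c_j (1 ≤ j ≤ k) obtained by inserting the remaining vertex x_{k+1} immediately after x_j. Then the sum of their weights equals Σ_{j=1}^{k} weight(c_j) = m·k + (k−1)·weight((x_1 x_2 ⋯ x_k)); in particular, if weight((x_1 ⋯ x_k)) = m + 2 − k, then Σ_{j=1}^{k} weight(c_j) = (2m + 3 − k)·k − (m + 2), so some c_j has weight strictly less than 2m + 3 − k. -/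
namespace MutClassAn

open Finset

variable {V : Type} [Fintype V] [DecidableEq V]

private lemma mod_ne_helper (j s k : ℕ) (hj : j < k) (hs0 : 0 < s) (hs : s < k) :
    (j + s) % k ≠ j := by
  rcases lt_or_ge (j + s) k with h | h
  · rw [Nat.mod_eq_of_lt h]; omega
  · rw [Nat.mod_eq_sub_mod h, Nat.mod_eq_of_lt (by omega)]; omega

private lemma val_add_aux {k : ℕ} [NeZero k] (hk : 3 ≤ k) (j a : Fin k) :
    ((j + 1 + a : Fin k)).val = (j.val + 1 + a.val) % k := by
  have h1 : ((1 : Fin k)).val = 1 := by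
    rw [Fin.val_one']; exact Nat.mod_eq_of_lt (by omega)
  rw [Fin.val_add, Fin.val_add, h1, Nat.mod_add_mod]

private lemma weight_insertAfter {W : Type} {k : ℕ} (hk : 3 ≤ k)
    (c : W → W → ℕ) (x : Fin (k + 1) → W) (j : Fin k) :
    cycleWeight c (insertAfter x j)
      = (c (x (Fin.last k)) (x (cyc j).castSucc) : ℤ)
        + (c (x j.castSucc) (x (Fin.last k)) : ℤ)
        - (c (x j.castSucc) (x (cyc j).castSucc) : ℤ)
        + ∑ b : Fin k, (c (x b.castSucc) (x (cyc b).castSucc) : ℤ) := by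
  haveI : NeZero k := ⟨by omega⟩
  have hk0 : 0 < k := by omega
  set z := x (Fin.last k) with hz
  set g : Fin k → ℤ := fun b => (c (x b.castSucc) (x (cyc b).castSucc) : ℤ) with hg
  set h : Fin k → ℤ :=
    fun b => g b + (if b = j then (c (x j.castSucc) z : ℤ) - g j else 0) with hh
  unfold cycleWeight
  rw [Fin.sum_univ_succ]
  -- the first term
  have h00 : insertAfter x j 0 = z := by simp [insertAfter, hz]
  have hcyc0 : cyc (0 : Fin (k + 1)) = ⟨1, by omega⟩ := by
    apply Fin.ext
    show ((0 : Fin (k + 1)).val + 1) % (k + 1) = 1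
    rw [Fin.val_zero]
    exact Nat.mod_eq_of_lt (by omega)
  have h01 : insertAfter x j (cyc 0) = x (cyc j).castSucc := by
    rw [hcyc0]
    have hne : (⟨1, by omega⟩ : Fin (k + 1)) ≠ 0 := by
      simp [Fin.ext_iff]
    rw [insertAfter, if_neg hne]
    rfl
  rw [h00, h01]
  -- the tail terms
  have key : ∀ a : Fin k,
      (c (insertAfter x j a.succ) (insertAfter x j (cyc a.succ))) = h (j + 1 + a) := by
    intro a
    have hbval : ((j + 1 + a : Fin k)).val = (j.val + 1 + a.val) % k := val_add_aux hk j a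
    have hfst : insertAfter x j a.succ = x ((j + 1 + a : Fin k)).castSucc := by
      rw [insertAfter, if_neg (Fin.succ_ne_zero a)]
      congr 1
      apply Fin.ext
      show (j.val + a.succ.val) % k = ((j + 1 + a : Fin k)).val
      rw [hbval, Fin.val_succ]
      have e : j.val + (a.val + 1) = j.val + 1 + a.val := by omega
      rw [e]
    rcases lt_or_ge a.val (k - 1) with hlt | hge
    · -- middle case
      have hbne : (j + 1 + a : Fin k) ≠ j := by
        intro hbj
        have hv := congrArg Fin.val hbj
        rw [hbval] at hv
        have hv2 : (j.val + (1 + a.val)) % k = j.val := by rw [← Nat.add_assoc]; exact hv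
        exact mod_ne_helper j.val (1 + a.val) k j.isLt (by omega) (by omega) hv2
      have hcycval : (cyc a.succ).val = a.val + 2 := by
        show ((a.val + 1 + 1) % (k + 1)) = a.val + 2
        rw [Nat.mod_eq_of_lt (by omega)]
      have hcne : cyc a.succ ≠ 0 := by
        intro hcz
        have := congrArg Fin.val hcz
        rw [hcycval] at this
        simp at this
      have hsnd : insertAfter x j (cyc a.succ) = x (cyc (j + 1 + a)).castSucc := by
        rw [insertAfter, if_neg hcne]
        congr 1
        apply Fin.ext
        show (j.val + (cyc a.succ).val) % k = ((j + 1 + a : Fin k).val + 1) % k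
        rw [hcycval, hbval, Nat.mod_add_mod]
        congr 1
        omega
      rw [hfst, hsnd, hh]
      simp only [if_neg hbne, add_zero]
      rfl
    · -- last case : a.val = k - 1
      have haval : a.val = k - 1 := by have := a.isLt; omega
      have hbj : (j + 1 + a : Fin k) = j := by
        apply Fin.ext
        rw [hbval]
        have h2 : j.val + 1 + a.val = j.val + k := by omega
        rw [h2, Nat.add_mod_right]
        exact Nat.mod_eq_of_lt j.isLt
      have hcz : cyc a.succ = 0 := by
        apply Fin.ext
        show ((a.val + 1 + 1) % (k + 1)) = 0
        have : a.val + 1 + 1 = k + 1 := by omega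
        rw [this, Nat.mod_self]
      have hsnd : insertAfter x j (cyc a.succ) = z := by
        rw [hcz]; simp [insertAfter, hz]
      rw [hfst, hsnd, hbj, hh]
      simp only [if_pos rfl]
      push_cast
      ring
  have htail : ∑ a : Fin k,
      (c (insertAfter x j a.succ) (insertAfter x j (cyc a.succ)) : ℤ)
        = ∑ b : Fin k, h b := by
    calc ∑ a : Fin k, (c (insertAfter x j a.succ) (insertAfter x j (cyc a.succ)) : ℤ)
        = ∑ a : Fin k, h ((Equiv.addLeft (j + 1)) a) := by
          refine Finset.sum_congr rfl fun a _ => ?_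
          rw [key a]; rfl
      _ = ∑ b : Fin k, h b :=
          Fintype.sum_equiv (Equiv.addLeft (j + 1)) _ h fun a => rfl
  rw [htail, hh]
  simp only [Finset.sum_add_distrib, Finset.sum_ite_eq' Finset.univ j, Finset.mem_univ,
    if_pos]
  ring

/-- The key counting identity: in a coloured clique on `k + 1` vertices, for a
Hamiltonian cycle through the first `k` vertices of weight `W₀`, the `k` cycles
`c_j` obtained by inserting the remaining vertex after the `j`-th one have total
weight `m·k + (k-1)·W₀`; in particular if `W₀ = m + 2 - k` the total weight is
`(2m + 3 - k)·k - (m + 2)`, so some `c_j` has weight `< 2m + 3 - k`. -/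
theorem insert_cycles_weight_sum (m k : ℕ) (hm : 1 ≤ m) (hk : 3 ≤ k)
    (W : Type) [Fintype W] (hcard : Fintype.card W = k + 1)
    (c : W → W → ℕ) (hc : IsCliqueColouring m c)
    (x : Fin (k + 1) → W) (hx : Function.Bijective x) :
    (∑ j : Fin k, cycleWeight c (insertAfter x j))
        = (m : ℤ) * k + ((k : ℤ) - 1) * cycleWeight c (fun i : Fin k => x i.castSucc) ∧
    (cycleWeight c (fun i : Fin k => x i.castSucc) = (m : ℤ) + 2 - k →
      (∑ j : Fin k, cycleWeight c (insertAfter x j))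
          = (2 * (m : ℤ) + 3 - k) * k - ((m : ℤ) + 2) ∧
      ∃ j : Fin k, cycleWeight c (insertAfter x j) < 2 * (m : ℤ) + 3 - k) := by
  haveI : NeZero k := ⟨by omega⟩
  have hk0 : 0 < k := by omega
  set z := x (Fin.last k) with hz
  set g : Fin k → ℤ := fun b => (c (x b.castSucc) (x (cyc b).castSucc) : ℤ) with hg
  have hW : cycleWeight c (fun i : Fin k => x i.castSucc) = ∑ b : Fin k, g b := rfl
  have hcyc : ∀ j : Fin k, cyc j = j + 1 := by
    intro j
    apply Fin.ext
    show (j.val + 1) % k = (j + 1 : Fin k).val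
    rw [Fin.val_add, Fin.val_one']
    congr 1
    rw [Nat.mod_eq_of_lt (by omega : 1 < k)]
  have hA : ∑ j : Fin k, (c z (x (cyc j).castSucc) : ℤ)
      = ∑ j : Fin k, (c z (x j.castSucc) : ℤ) := by
    calc ∑ j : Fin k, (c z (x (cyc j).castSucc) : ℤ)
        = ∑ j : Fin k, (fun b : Fin k => (c z (x b.castSucc) : ℤ)) ((Equiv.addRight (1 : Fin k)) j) := by
          refine Finset.sum_congr rfl fun j _ => ?_
          rw [hcyc j]; rfl
      _ = ∑ j : Fin k, (c z (x j.castSucc) : ℤ) :=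
          Fintype.sum_equiv (Equiv.addRight (1 : Fin k)) _ _ fun j => rfl
  have hpair : ∀ j : Fin k, (c z (x j.castSucc) : ℤ) + (c (x j.castSucc) z : ℤ) = m := by
    intro j
    have hne : x j.castSucc ≠ z := fun hh =>
      (Fin.castSucc_lt_last j).ne (hx.1 hh)
    have := hc.2.1 _ _ hne
    push_cast [← this]
    ring
  have main : (∑ j : Fin k, cycleWeight c (insertAfter x j))
      = (m : ℤ) * k + ((k : ℤ) - 1) * cycleWeight c (fun i : Fin k => x i.castSucc) := by
    have hrw : ∀ j : Fin k, cycleWeight c (insertAfter x j)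
        = (c z (x (cyc j).castSucc) : ℤ) + (c (x j.castSucc) z : ℤ)
          - g j + ∑ b : Fin k, g b := fun j => weight_insertAfter hk c x j
    calc ∑ j : Fin k, cycleWeight c (insertAfter x j)
        = ∑ j : Fin k, ((c z (x (cyc j).castSucc) : ℤ) + (c (x j.castSucc) z : ℤ)
            - g j + ∑ b : Fin k, g b) := Finset.sum_congr rfl fun j _ => hrw j
      _ = (∑ j : Fin k, (c z (x (cyc j).castSucc) : ℤ))
            + (∑ j : Fin k, (c (x j.castSucc) z : ℤ))
            - (∑ j : Fin k, g j)
            + (k : ℤ) * (∑ b : Fin k, g b) := by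
          rw [Finset.sum_add_distrib, Finset.sum_sub_distrib, Finset.sum_add_distrib,
            Finset.sum_const, Finset.card_univ, Fintype.card_fin, nsmul_eq_mul]
      _ = (∑ j : Fin k, ((c z (x j.castSucc) : ℤ) + (c (x j.castSucc) z : ℤ)))
            - (∑ j : Fin k, g j)
            + (k : ℤ) * (∑ b : Fin k, g b) := by
          rw [hA, Finset.sum_add_distrib]
      _ = (m : ℤ) * k + ((k : ℤ) - 1) * (∑ b : Fin k, g b) := by
          rw [Finset.sum_congr rfl fun j _ => hpair j, Finset.sum_const,
            Finset.card_univ, Fintype.card_fin, nsmul_eq_mul]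
          ring
      _ = (m : ℤ) * k + ((k : ℤ) - 1) * cycleWeight c (fun i : Fin k => x i.castSucc) := by
          rw [hW]
  refine ⟨main, fun h0 => ⟨?_, ?_⟩⟩
  · rw [main, h0]; ring
  · by_contra hcon
    push_neg at hcon
    have hle : (k : ℤ) * (2 * (m : ℤ) + 3 - k)
        ≤ ∑ j : Fin k, cycleWeight c (insertAfter x j) := by
      calc (k : ℤ) * (2 * (m : ℤ) + 3 - k)
          = ∑ _j : Fin k, (2 * (m : ℤ) + 3 - k) := by
            rw [Finset.sum_const, Finset.card_univ, Fintype.card_fin, nsmul_eq_mul]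
        _ ≤ ∑ j : Fin k, cycleWeight c (insertAfter x j) :=
            Finset.sum_le_sum fun j _ => hcon j
    rw [main, h0] at hle
    have hm' : (1 : ℤ) ≤ m := by exact_mod_cast hm
    nlinarith [hle]

end MutClassAn
end
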